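/- For the unbiased simple random walk on ℤ (transition matrix M with m_{ij} = 1 iff |i−j| = 1), the associated Markov shift Σ_M admits no fair measure, while for every point y₀ and every backward trajectory (y_n), the geometric averages ⁿ√(c(y₀)⋯c(y_{n−1})) converge to 2. -/

import Mathlib

open MeasureTheory
open scoped ENNReal

/-- The one-sided Markov shift of the unbiased simple random walk on `ℤ`:
sequences `ω : ℕ → ℤ` with `|ω (k+1) - ω k| = 1` for all `k`. -/
def RWSpace : Set (ℕ → ℤ) :=
  {ω | ∀ k : ℕ, ω (k + 1) - ω k = 1 ∨ ω (k + 1) - ω k = -1}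

/-- The shift map on `RWSpace`. -/
def rwShift : RWSpace → RWSpace :=
  fun ω => ⟨fun k => ω.1 (k + 1), fun k => ω.2 (k + 1)⟩

/-- The cylinder set of sequences whose first `n + 1` symbols agree with `w`. -/
def rwCyl (n : ℕ) (w : ℕ → ℤ) : Set RWSpace :=
  {ω | ∀ k ≤ n, ω.1 k = w k}

/-- Prepend a symbol to a word. -/
def rwPrepend (i : ℤ) (w : ℕ → ℤ) : ℕ → ℤ :=
  fun k => match k with
  | 0 => i
  | Nat.succ k' => w k'

/- ### auxiliary lemmas -/

lemma rwPrepend_mem (i : ℤ) (x : ℕ → ℤ) (hx : x ∈ RWSpace)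
    (h : x 0 - i = 1 ∨ x 0 - i = -1) : rwPrepend i x ∈ RWSpace := by
  intro k
  cases k with
  | zero => simpa [rwPrepend] using h
  | succ m => simpa [rwPrepend] using hx m

lemma rwShift_preimage (x : RWSpace) :
    rwShift ⁻¹' {x} =
      {⟨rwPrepend (x.1 0 - 1) x.1, rwPrepend_mem _ _ x.2 (by left; ring)⟩,
       ⟨rwPrepend (x.1 0 + 1) x.1, rwPrepend_mem _ _ x.2 (by right; ring)⟩} := by
  ext ω
  simp only [Set.mem_preimage, Set.mem_singleton_iff, Set.mem_insert_iff]
  constructor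
  · intro h
    have hval : ∀ k, ω.1 (k + 1) = x.1 k := by
      intro k
      exact congrFun (congrArg Subtype.val h) k
    have h0 := ω.2 0
    rw [hval 0] at h0
    rcases h0 with h0 | h0
    · left
      apply Subtype.ext
      funext k
      cases k with
      | zero => simp [rwPrepend]; omega
      | succ m => simpa [rwPrepend] using hval m
    · right
      apply Subtype.ext
      funext k
      cases k with
      | zero => simp [rwPrepend]; omega
      | succ m => simpa [rwPrepend] using hval m
  · rintro (h | h) <;> subst h <;> exact Subtype.ext rfl

lemma rwShift_preimage_ncard (x : RWSpace) : (rwShift ⁻¹' {x}).ncard = 2 := by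
  rw [rwShift_preimage]
  apply Set.ncard_pair
  intro h
  have := congrFun (congrArg Subtype.val h) 0
  simp [rwPrepend] at this
  omega

lemma rwCyl_measurable (n : ℕ) (w : ℕ → ℤ) : MeasurableSet (rwCyl n w) := by
  have : rwCyl n w = ⋂ k, ⋂ (_ : k ≤ n), (fun ω : RWSpace => ω.1 k) ⁻¹' {w k} := by
    ext ω; simp [rwCyl]
  rw [this]
  refine MeasurableSet.iInter fun k => MeasurableSet.iInter fun _ => ?_
  exact ((measurable_pi_apply k).comp measurable_subtype_coe) (MeasurableSet.singleton _)

/-- the level `j` cylinder `[j]` -/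
def C0 (j : ℤ) : Set RWSpace := rwCyl 0 (fun _ => j)

lemma mem_C0 (j : ℤ) (ω : RWSpace) : ω ∈ C0 j ↔ ω.1 0 = j := by
  constructor
  · intro h; exact h 0 le_rfl
  · intro h k hk; interval_cases k; exact h

/-- the 2-cylinder `[i, j]` -/
def C1 (i j : ℤ) : Set RWSpace := rwCyl 1 (rwPrepend i (fun _ => j))

lemma mem_C1 (i j : ℤ) (ω : RWSpace) : ω ∈ C1 i j ↔ ω.1 0 = i ∧ ω.1 1 = j := by
  constructor
  · intro h; exact ⟨h 0 (by norm_num), h 1 le_rfl⟩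
  · rintro ⟨h0, h1⟩ k hk
    interval_cases k
    · exact h0
    · exact h1

lemma C0_split (i : ℤ) : C0 i = C1 i (i - 1) ∪ C1 i (i + 1) := by
  ext ω
  simp only [Set.mem_union, mem_C0, mem_C1]
  constructor
  · intro h
    have h1' : ω.1 1 - ω.1 0 = 1 ∨ ω.1 1 - ω.1 0 = -1 := ω.2 0
    rw [h] at h1'
    rcases h1' with h1 | h1
    · right; exact ⟨h, by omega⟩
    · left; exact ⟨h, by omega⟩
  · rintro (⟨h, _⟩ | ⟨h, _⟩) <;> exact h

/-- For the unbiased simple random walk shift `Σ_M` (`m i j = 1` iff `|i-j| = 1`),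
there is no fair measure (a shift-invariant Borel probability measure satisfying
`μ([i] ∩ σ⁻¹ B) = μ B / c(B)` on cylinders, where `c(B) = 2`); nevertheless for every point
`y₀` and every backward trajectory `(yₙ)`, the geometric averages
`(c(y₀) ⋯ c(y_{n-1}))^(1/n)` converge to `2`. -/
theorem rw_no_fair_measure_and_geometric_average :
    (¬ ∃ μ : Measure RWSpace, IsProbabilityMeasure μ ∧
      (∀ A : Set RWSpace, MeasurableSet A → μ (rwShift ⁻¹' A) = μ A) ∧
      (∀ (n : ℕ) (w : ℕ → ℤ),
        (∀ k < n, w (k + 1) - w k = 1 ∨ w (k + 1) - w k = -1) →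
        ∀ i : ℤ, w 0 - i = 1 ∨ w 0 - i = -1 →
          μ (rwCyl (n + 1) (rwPrepend i w)) = μ (rwCyl n w) / 2)) ∧
    (∀ y : ℕ → RWSpace, (∀ n : ℕ, rwShift (y (n + 1)) = y n) →
      Filter.Tendsto
        (fun n : ℕ => (∏ k ∈ Finset.range n, ((rwShift ⁻¹' {y k}).ncard : ℝ)) ^ ((n : ℝ)⁻¹))
        Filter.atTop (nhds 2)) := by
  constructor
  · rintro ⟨μ, hprob, _hinv, hfair⟩
    -- `a j = μ [j]`
    set a : ℤ → ℝ≥0∞ := fun j => μ (C0 j) with ha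
    -- the fairness equation for 2-cylinders
    have hC1 : ∀ i j : ℤ, (j - i = 1 ∨ j - i = -1) → μ (C1 i j) = a j / 2 := by
      intro i j hij
      have := hfair 0 (fun _ => j) (by omega) i (by simpa using hij)
      simpa [C1, C0, ha] using this
    -- harmonicity
    have hharm : ∀ i : ℤ, a i = a (i - 1) / 2 + a (i + 1) / 2 := by
      intro i
      have hd : Disjoint (C1 i (i - 1)) (C1 i (i + 1)) := by
        rw [Set.disjoint_left]
        intro ω h1 h2
        rw [mem_C1] at h1 h2
        omega
      have : μ (C0 i) = μ (C1 i (i - 1)) + μ (C1 i (i + 1)) := by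
        rw [C0_split, measure_union hd (rwCyl_measurable _ _)]
      rw [ha]
      simp only
      rw [this, hC1 i (i - 1) (by omega), hC1 i (i + 1) (by omega)]
    have hfin : ∀ j, a j ≠ ∞ := fun j => measure_ne_top μ _
    -- real version
    set f : ℤ → ℝ := fun j => (a j).toReal with hf
    have hf0 : ∀ j, 0 ≤ f j := fun j => ENNReal.toReal_nonneg
    have hf1 : ∀ j, f j ≤ 1 := by
      intro j
      have : a j ≤ 1 := by
        rw [ha]; simpa using prob_le_one
      simpa [hf] using ENNReal.toReal_mono (by norm_num) this
    have hfharm : ∀ i : ℤ, 2 * f i = f (i - 1) + f (i + 1) := by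
      intro i
      have := congrArg ENNReal.toReal (hharm i)
      rw [ENNReal.toReal_add (by simp [ENNReal.div_eq_top, hfin]) (by simp [ENNReal.div_eq_top, hfin])] at this
      rw [ENNReal.toReal_div, ENNReal.toReal_div] at this
      simp only [hf]
      rw [this]
      norm_num
      ring
    -- differences are constant
    have hdiff : ∀ i : ℤ, f (i + 1) - f i = f 1 - f 0 := by
      intro i
      induction i using Int.induction_on with
      | zero => simp
      | succ n ih =>
        have := hfharm (n + 1)
        have h2 : f (n + 1 - 1) = f n := by norm_num
        rw [h2] at this
        rw [show ((n : ℤ) + 1 + 1) = (n + 1) + 1 by ring] at this ⊢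
        linarith
      | pred n ih =>
        have := hfharm (-n)
        have h2 : f (-(n : ℤ) - 1 + 1) = f (-n) := by ring_nf
        rw [show (-(n:ℤ) - 1 + 1) = -n by ring] at *
        linarith
    -- affine formula
    have haff : ∀ i : ℤ, f i = f 0 + i * (f 1 - f 0) := by
      intro i
      induction i using Int.induction_on with
      | zero => simp
      | succ n ih =>
        have := hdiff n
        push_cast
        push_cast at ih
        linarith
      | pred n ih =>
        have := hdiff (-(n : ℤ) - 1)
        rw [show (-(n:ℤ) - 1 + 1) = -n by ring] at this
        push_cast
        push_cast at ih
        linarith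
    -- the slope must be zero
    have hslope : f 1 - f 0 = 0 := by
      by_contra hne
      obtain ⟨N, hN⟩ := exists_nat_gt (2 / |f 1 - f 0|)
      have hNpos : (0:ℝ) < |f 1 - f 0| := abs_pos.mpr hne
      have h2N : 2 < N * |f 1 - f 0| := by
        rw [div_lt_iff₀ hNpos] at hN
        linarith
      rcases le_or_gt 0 (f 1 - f 0) with hpos | hneg
      · have := haff N
        have hb := hf1 (N : ℤ)
        have h0 := hf0 0
        rw [abs_of_nonneg hpos] at h2N
        push_cast at this
        linarith
      · have := haff N
        have hb := hf0 (N : ℤ)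
        have h1 := hf1 0
        rw [abs_of_neg hneg] at h2N
        push_cast at this
        linarith
    -- f constant, hence a constant
    have hconst : ∀ i : ℤ, a i = a 0 := by
      intro i
      have : f i = f 0 := by rw [haff i, hslope]; ring
      exact (ENNReal.toReal_eq_toReal_iff' (hfin i) (hfin 0)).mp this
    -- total mass
    have hcover : (⋃ j : ℤ, C0 j) = Set.univ := by
      ext ω
      simp only [Set.mem_iUnion, Set.mem_univ, iff_true]
      exact ⟨ω.1 0, (mem_C0 _ ω).mpr rfl⟩
    have hdisj : Pairwise (Function.onFun Disjoint (fun j => C0 j)) := by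
      intro i j hij
      rw [Function.onFun, Set.disjoint_left]
      intro ω h1 h2
      rw [mem_C0] at h1 h2
      exact hij (h1 ▸ h2.symm ▸ rfl)
    have htsum : ∑' j : ℤ, a j = 1 := by
      rw [ha]
      rw [← measure_iUnion hdisj (fun j => rwCyl_measurable _ _), hcover]
      exact measure_univ
    rcases eq_or_ne (a 0) 0 with h0 | h0
    · rw [tsum_congr hconst, h0] at htsum
      simp at htsum
    · rw [tsum_congr hconst, ENNReal.tsum_const_eq_top_of_ne_zero h0] at htsum
      simp at htsum
  · intro y hy
    have hcard : ∀ k, ((rwShift ⁻¹' {y k}).ncard : ℝ) = 2 := by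
      intro k
      rw [rwShift_preimage_ncard]
      norm_num
    apply Filter.Tendsto.congr' (f₁ := fun _ : ℕ => (2:ℝ))
    · filter_upwards [Filter.eventually_ge_atTop 1] with n hn
      have hprod : (∏ k ∈ Finset.range n, ((rwShift ⁻¹' {y k}).ncard : ℝ)) = 2 ^ n := by
        rw [Finset.prod_congr rfl (fun k _ => hcard k)]
        simp
      rw [hprod, ← Real.rpow_natCast 2 n, ← Real.rpow_mul (by norm_num),
        mul_inv_cancel₀ (by positivity), Real.rpow_one]
    · exact tendsto_const_nhds
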